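/- Let T be a tree, N a node of T, s_i (i ∈ ω) pairwise distinct elements of N, and T′ ⊆ [s_0,·) := {t ∈ T : t ≥ s_0}. Suppose there exist a condensation g_0 from [s_0,·) onto [s_0,·)∖T′, a condensation g_1 from [s_1,·) onto T′, and condensations g_i from [s_i,·) onto [s_{i-1},·) for every i ≥ 2 (all these sets carrying the induced order). Then T is not reversible; moreover, N is a critical node of T. -/
import Mathlib


/- A tree is a partial order in which the set of strict predecessors of every
element is well-ordered. Basic vocabulary: condensations, automorphisms,
reversibility, heights, levels, nodes, upward closures, branches. -/

universe u v

/- The height of an element `t`: the order type of the set `(·,t)` of its strict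
predecessors (which is well-ordered when the order is a tree). -/
open Classical in
noncomputable def treeHt {T : Type u} [PartialOrder T] (t : T) : Ordinal.{u} :=
  if h : IsWellOrder {s : T // s < t} (fun a b => (a : T) < (b : T)) then
    @Ordinal.type {s : T // s < t} (fun a b => (a : T) < (b : T)) h
  else 0

/-- A partial order is a tree iff every set `(·,t)` is well-ordered by `<`. -/
def IsTree (T : Type u) [PartialOrder T] : Prop :=
  ∀ t : T, IsWellOrder {s : T // s < t} (fun a b => (a : T) < (b : T))

/-- A condensation: a bijective endomorphism. -/
def IsCond {T : Type u} [PartialOrder T] (f : T → T) : Prop :=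
  Function.Bijective f ∧ ∀ s t : T, s < t → f s < f t

/-- An automorphism: a bijection preserving and reflecting `<`. -/
def IsAuto {T : Type u} [PartialOrder T] (f : T → T) : Prop :=
  Function.Bijective f ∧ ∀ s t : T, s < t ↔ f s < f t

/-- A structure is reversible iff every condensation is an automorphism. -/
def Reversible (T : Type u) [PartialOrder T] : Prop :=
  ∀ f : T → T, IsCond f → IsAuto f

/-- The `α`-th level: elements of height `α`. -/
def level (T : Type u) [PartialOrder T] (α : Ordinal.{u}) : Set T :=
  {t : T | treeHt t = α}

/-- The height of the tree: the least ordinal `α` with `L_α = ∅`. -/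
noncomputable def treeHeight (T : Type u) [PartialOrder T] : Ordinal.{u} :=
  sInf {α : Ordinal.{u} | level T α = ∅}

/-- Nodes: equivalence classes of the relation `s ∼ t` iff `(·,s) = (·,t)`. -/
def IsNode {T : Type u} [PartialOrder T] (N : Set T) : Prop :=
  ∃ t : T, N = {s : T | Set.Iio s = Set.Iio t}

/-- `S↑`, the upward closure of `S`. -/
def upClo {T : Type u} [PartialOrder T] (S : Set T) : Set T :=
  {t : T | ∃ s ∈ S, s ≤ t}

/-- A branch: a maximal chain. -/
def IsBranch {T : Type u} [PartialOrder T] (b : Set T) : Prop :=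
  IsMaxChain (· ≤ ·) b

/- The height (order type) of a chain (junk value `0` if not well-ordered;
in a tree every chain is well-ordered). -/
open Classical in
noncomputable def chainHt {T : Type u} [PartialOrder T] (b : Set T) : Ordinal.{u} :=
  if h : IsWellOrder b (fun x y : b => (x : T) < (y : T)) then
    @Ordinal.type b (fun x y : b => (x : T) < (y : T)) h
  else 0

/-- A node `N` is critical iff there are a condensation `g` of the tree `N↑`
and `a ∈ N` with `ht_{N↑}(a) < ht_{N↑}(g(a))` (heights computed in `N↑`). -/
def IsCriticalNode {T : Type u} [PartialOrder T] (N : Set T) : Prop :=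
  IsNode N ∧ ∃ g : ↥(upClo N) → ↥(upClo N), IsCond g ∧
    ∃ a : ↥(upClo N), (a : T) ∈ N ∧ treeHt a < treeHt (g a)

/-- A condensation from the suborder `A` onto the suborder `B`: a bijection
`A → B` mapping `<` to `<`. -/
def CondOn {T : Type u} [PartialOrder T] (A B : Set T) : Prop :=
  ∃ h : ↥A → ↥B, Function.Bijective h ∧
    ∀ x y : ↥A, (x : T) < (y : T) → (h x : T) < (h y : T)


/-! ### Auxiliary lemmas -/

lemma treeHt_congr {T : Type u} [PartialOrder T] (hT : IsTree T) {a b : T}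
    (h : Set.Iio a = Set.Iio b) : treeHt a = treeHt b := by
  have hiff : ∀ x : T, x < a ↔ x < b := fun x => Set.ext_iff.mp h x
  haveI ha := hT a; haveI hb := hT b
  unfold treeHt
  rw [dif_pos ha, dif_pos hb, Ordinal.type_eq]
  exact ⟨⟨⟨fun x => ⟨x.1, (hiff x.1).1 x.2⟩, fun x => ⟨x.1, (hiff x.1).2 x.2⟩,
    fun x => rfl, fun x => rfl⟩, Iff.rfl⟩⟩

lemma treeHt_lt {T : Type u} [PartialOrder T] (hT : IsTree T) {a b : T} (hab : a < b) :
    treeHt a < treeHt b := by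
  haveI ha := hT a; haveI hb := hT b
  unfold treeHt; rw [dif_pos ha, dif_pos hb]
  let emb : {x : T // x < a} ↪ {x : T // x < b} :=
    ⟨fun x => ⟨x.1, lt_trans x.2 hab⟩, by intro x y hxy; apply Subtype.ext; simpa using hxy⟩
  let remb : (fun x y : {x : T // x < a} => (x:T) < (y:T)) ↪r
      (fun x y : {x : T // x < b} => (x:T) < (y:T)) := ⟨emb, Iff.rfl⟩
  refine PrincipalSeg.ordinal_type_lt ⟨remb, ⟨a, hab⟩, fun c => ⟨?_, ?_⟩⟩
  · rintro ⟨x, hx⟩; rw [← hx]; exact x.2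
  · intro hc; exact ⟨⟨c.1, hc⟩, Subtype.ext rfl⟩

lemma isTree_subtype {T : Type u} [PartialOrder T] (hT : IsTree T) (S : Set T) :
    IsTree ↥S := by
  intro t
  haveI := hT t.1
  exact RelEmbedding.isWellOrder
    (⟨⟨fun x => ⟨x.1.1, Subtype.coe_lt_coe.mpr x.2⟩,
      by intro x y h; apply Subtype.ext; apply Subtype.ext; simpa using h⟩,
      fun {x y} => Subtype.coe_lt_coe⟩ :
      (fun a b : {x : ↥S // x < t} => (a:↥S) < (b:↥S)) ↪r
      (fun a b : {x : T // x < t.1} => (a:T) < (b:T)))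

lemma treeHt_auto {T : Type u} [PartialOrder T] (hT : IsTree T) {f : T → T}
    (hf : IsAuto f) (t : T) : treeHt t = treeHt (f t) := by
  haveI h1 := hT t; haveI h2 := hT (f t)
  unfold treeHt; rw [dif_pos h1, dif_pos h2, Ordinal.type_eq]
  have hbij : Function.Bijective
      (fun x : {x : T // x < t} => (⟨f x.1, (hf.2 x.1 t).1 x.2⟩ : {y : T // y < f t})) := by
    constructor
    · intro x y hxy; apply Subtype.ext; exact hf.1.1 (by simpa using hxy)
    · intro y
      obtain ⟨x, hx⟩ := hf.1.2 y.1
      refine ⟨⟨x, (hf.2 x t).2 ?_⟩, Subtype.ext hx⟩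
      rw [hx]; exact y.2
  exact ⟨⟨Equiv.ofBijective _ hbij, fun {a b} => (hf.2 a.1 b.1).symm⟩⟩

/-- The piecewise map used in the proof of Statement 14. -/
def pieceF {T : Type u} [PartialOrder T] {s : ℕ → T} {T' : Set T}
    (e0 : ↥(Set.Ici (s 0)) → ↥(Set.Ici (s 0) \ T'))
    (e1 : ↥(Set.Ici (s 1)) → ↥T')
    (e : ∀ i : ℕ, ↥(Set.Ici (s (i+2))) → ↥(Set.Ici (s (i+1)))) :
    (i : ℕ) → (x : T) → s i ≤ x → T
  | 0, x, hx => ((e0 ⟨x, hx⟩ : ↥(Set.Ici (s 0) \ T')) : T)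
  | 1, x, hx => ((e1 ⟨x, hx⟩ : ↥T') : T)
  | (i+2), x, hx => ((e i ⟨x, hx⟩ : ↥(Set.Ici (s (i+1)))) : T)

open Classical in
/-- The global condensation used in the proof of Statement 14. -/
noncomputable def bigF {T : Type u} [PartialOrder T] {s : ℕ → T} {T' : Set T}
    (e0 : ↥(Set.Ici (s 0)) → ↥(Set.Ici (s 0) \ T'))
    (e1 : ↥(Set.Ici (s 1)) → ↥T')
    (e : ∀ i : ℕ, ↥(Set.Ici (s (i+2))) → ↥(Set.Ici (s (i+1)))) : T → T := fun x =>
  if h : ∃ i, s i ≤ x then pieceF e0 e1 e (Nat.find h) x (Nat.find_spec h) else x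

/-- Let `T` be a tree, `N` a node of `T`, `s_i` (`i ∈ ω`) pairwise
distinct elements of `N` and `T' ⊆ [s_0,·)`. If there are a condensation from
`[s_0,·)` onto `[s_0,·) ∖ T'`, a condensation from `[s_1,·)` onto `T'`, and
condensations from `[s_i,·)` onto `[s_{i-1},·)` for all `i ≥ 2`, then `T` is not
reversible; moreover `N` is a critical node of `T`. -/
theorem stmt14 {T : Type u} [PartialOrder T] (hT : IsTree T)
    (N : Set T) (hN : IsNode N) (s : ℕ → T) (hs : Function.Injective s)
    (hsN : ∀ i : ℕ, s i ∈ N) (T' : Set T) (hT' : T' ⊆ Set.Ici (s 0))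
    (h0 : CondOn (Set.Ici (s 0)) (Set.Ici (s 0) \ T'))
    (h1 : CondOn (Set.Ici (s 1)) T')
    (h2 : ∀ i : ℕ, 2 ≤ i → CondOn (Set.Ici (s i)) (Set.Ici (s (i - 1)))) :
    ¬ Reversible T ∧ IsCriticalNode N := by
  classical
  obtain ⟨t0, hNt⟩ := hN
  have hIio : ∀ i, Set.Iio (s i) = Set.Iio t0 := by
    intro i; have := hsN i; rw [hNt] at this; exact this
  have hIio' : ∀ i j, Set.Iio (s i) = Set.Iio (s j) := fun i j => (hIio i).trans (hIio j).symm
  have hcomp : ∀ {x u v : T}, u < x → v < x → (u < v ∨ u = v ∨ v < u) := by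
    intro x u v hu hv
    haveI := hT x
    rcases @trichotomous _ (fun a b : {y : T // y < x} => (a:T) < (b:T)) _ ⟨u, hu⟩ ⟨v, hv⟩
      with h | h | h
    · exact Or.inl h
    · exact Or.inr (Or.inl (congrArg Subtype.val h))
    · exact Or.inr (Or.inr h)
  have huniq : ∀ i j (x : T), s i ≤ x → s j ≤ x → i = j := by
    intro i j x hi hj
    by_contra hne
    have hsij : s i ≠ s j := fun h => hne (hs h)
    have hlt : s i < s j ∨ s j < s i := by
      rcases eq_or_lt_of_le hi with h1 | h1
      · rcases eq_or_lt_of_le hj with h2 | h2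
        · exact absurd (h1.trans h2.symm) hsij
        · exact Or.inr (h1 ▸ h2)
      · rcases eq_or_lt_of_le hj with h2 | h2
        · exact Or.inl (h2 ▸ h1)
        · rcases hcomp h1 h2 with h | h | h
          · exact Or.inl h
          · exact absurd h hsij
          · exact Or.inr h
    rcases hlt with h | h
    · have hmem : s i ∈ Set.Iio (s j) := h
      rw [hIio' j i] at hmem
      exact absurd hmem (lt_irrefl _)
    · have hmem : s j ∈ Set.Iio (s i) := h
      rw [hIio' i j] at hmem
      exact absurd hmem (lt_irrefl _)
  have hbelow : ∀ {x y : T} (i : ℕ), x < y → s i ≤ y → (¬ s i ≤ x) → x < s i := by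
    intro x y i hxy hiy hix
    rcases eq_or_lt_of_le hiy with h1 | h1
    · exact h1 ▸ hxy
    · rcases hcomp hxy h1 with h | h | h
      · exact h
      · exact absurd (le_of_eq h.symm) hix
      · exact absurd (le_of_lt h) hix
  obtain ⟨e0, e0bij, e0mono⟩ := h0
  obtain ⟨e1, e1bij, e1mono⟩ := h1
  choose e ebij emono using fun i : ℕ => h2 (i + 2) (by omega)
  set f : T → T := bigF e0 e1 e with hfdef
  have fval : ∀ (i : ℕ) (x : T) (hx : s i ≤ x), f x = pieceF e0 e1 e i x hx := by
    intro i x hx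
    have h : ∃ j, s j ≤ x := ⟨i, hx⟩
    have key : ∀ (k : ℕ) (hk : s k ≤ x), pieceF e0 e1 e k x hk = pieceF e0 e1 e i x hx := by
      intro k hk
      have hki : k = i := huniq k i x hk hx
      subst hki; rfl
    rw [hfdef]
    simp only [bigF]
    rw [dif_pos h]
    exact key _ _
  have fid : ∀ x : T, (¬ ∃ i, s i ≤ x) → f x = x := by
    intro x hx
    rw [hfdef]
    simp only [bigF]
    rw [dif_neg hx]
  have f0 : ∀ x (hx : s 0 ≤ x), f x ∈ Set.Ici (s 0) \ T' := by
    intro x hx; rw [fval 0 x hx]; exact (e0 ⟨x, hx⟩).2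
  have f1 : ∀ x (hx : s 1 ≤ x), f x ∈ T' := by
    intro x hx; rw [fval 1 x hx]; exact (e1 ⟨x, hx⟩).2
  have f2 : ∀ (i : ℕ) x (hx : s (i + 2) ≤ x), f x ∈ Set.Ici (s (i + 1)) := by
    intro i x hx; rw [fval (i + 2) x hx]; exact (e i ⟨x, hx⟩).2
  have fU : ∀ x : T, (∃ i, s i ≤ x) → ∃ j, s j ≤ f x := by
    rintro x ⟨i, hi⟩
    rcases i with _ | _ | i
    · exact ⟨0, (f0 x hi).1⟩
    · exact ⟨0, hT' (f1 x hi)⟩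
    · exact ⟨i + 1, f2 i x hi⟩
  have finj : Function.Injective f := by
    intro x y hxy
    by_cases hx : ∃ i, s i ≤ x <;> by_cases hy : ∃ j, s j ≤ y
    · obtain ⟨i, hi⟩ := hx; obtain ⟨j, hj⟩ := hy
      have hij : i = j := by
        rcases i with _ | _ | i <;> rcases j with _ | _ | j
        · rfl
        · exact absurd (hxy ▸ f1 y hj) (f0 x hi).2
        · exact absurd (huniq 0 (j + 1) (f x) (f0 x hi).1 (hxy ▸ f2 j y hj)) (by omega)
        · exact absurd (hxy ▸ f1 x hi) (f0 y hj).2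
        · rfl
        · exact absurd (huniq 0 (j + 1) (f x) (hT' (f1 x hi)) (hxy ▸ f2 j y hj)) (by omega)
        · exact absurd (huniq (i + 1) 0 (f x) (f2 i x hi) (hxy ▸ (f0 y hj).1)) (by omega)
        · exact absurd (huniq (i + 1) 0 (f x) (f2 i x hi) (hxy ▸ hT' (f1 y hj))) (by omega)
        · have := huniq (i + 1) (j + 1) (f x) (f2 i x hi) (hxy ▸ f2 j y hj)
          omega
      subst hij
      rw [fval i x hi, fval i y hj] at hxy
      rcases i with _ | _ | i
      · simp only [pieceF] at hxy
        have := e0bij.1 (Subtype.ext hxy)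
        exact congrArg Subtype.val this
      · simp only [pieceF] at hxy
        have := e1bij.1 (Subtype.ext hxy)
        exact congrArg Subtype.val this
      · simp only [pieceF] at hxy
        have := (ebij i).1 (Subtype.ext hxy)
        exact congrArg Subtype.val this
    · exfalso
      obtain ⟨j, hj⟩ := fU x hx
      rw [hxy, fid y hy] at hj
      exact hy ⟨j, hj⟩
    · exfalso
      obtain ⟨j, hj⟩ := fU y hy
      rw [← hxy, fid x hx] at hj
      exact hx ⟨j, hj⟩
    · rw [fid x hx, fid y hy] at hxy; exact hxy
  have fsurj : Function.Surjective f := by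
    intro y
    by_cases hy : ∃ i, s i ≤ y
    · obtain ⟨i, hi⟩ := hy
      rcases i with _ | i
      · by_cases hyT : y ∈ T'
        · obtain ⟨x, hx⟩ := e1bij.2 ⟨y, hyT⟩
          refine ⟨x.1, ?_⟩
          rw [fval 1 x.1 x.2]
          exact Subtype.ext_iff.mp hx
        · obtain ⟨x, hx⟩ := e0bij.2 ⟨y, ⟨hi, hyT⟩⟩
          refine ⟨x.1, ?_⟩
          rw [fval 0 x.1 x.2]
          exact Subtype.ext_iff.mp hx
      · obtain ⟨x, hx⟩ := (ebij i).2 ⟨y, hi⟩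
        refine ⟨x.1, ?_⟩
        rw [fval (i + 2) x.1 x.2]
        exact Subtype.ext_iff.mp hx
    · exact ⟨y, fid y hy⟩
  have fmono : ∀ x y : T, x < y → f x < f y := by
    intro x y hxy
    by_cases hx : ∃ i, s i ≤ x
    · obtain ⟨i, hi⟩ := hx
      have hiy : s i ≤ y := le_trans hi (le_of_lt hxy)
      rw [fval i x hi, fval i y hiy]
      rcases i with _ | _ | i
      · exact e0mono ⟨x, hi⟩ ⟨y, hiy⟩ hxy
      · exact e1mono ⟨x, hi⟩ ⟨y, hiy⟩ hxy
      · exact emono i ⟨x, hi⟩ ⟨y, hiy⟩ hxy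
    · by_cases hy : ∃ i, s i ≤ y
      · obtain ⟨i, hi⟩ := hy
        have hxsi : x < s i := hbelow i hxy hi (fun h => hx ⟨i, h⟩)
        have hxall : ∀ j, x < s j := by
          intro j
          have hm : x ∈ Set.Iio (s i) := hxsi
          rw [hIio' i j] at hm; exact hm
        rw [fid x hx]
        obtain ⟨j, hj⟩ := fU y ⟨i, hi⟩
        exact lt_of_lt_of_le (hxall j) hj
      · rw [fid x hx, fid y hy]; exact hxy
  have hcond : IsCond f := ⟨⟨finj, fsurj⟩, fmono⟩
  obtain ⟨a, haN, haIio, hfa⟩ : ∃ a, a ∈ N ∧ Set.Iio a = Set.Iio (s 0) ∧ s 0 < f a := by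
    by_cases hT0 : s 0 ∈ T'
    · refine ⟨s 0, hsN 0, rfl, ?_⟩
      have h := f0 (s 0) le_rfl
      exact lt_of_le_of_ne h.1 (fun heq => h.2 (heq ▸ hT0))
    · refine ⟨s 1, hsN 1, hIio' 1 0, ?_⟩
      have h := f1 (s 1) le_rfl
      exact lt_of_le_of_ne (hT' h) (fun heq => hT0 (by rw [heq]; exact h))
  constructor
  · intro hrev
    have hauto := hrev f hcond
    have ha1 : treeHt a = treeHt (s 0) := treeHt_congr hT haIio
    have ha2 : treeHt (s 0) < treeHt (f a) := treeHt_lt hT hfa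
    have ha3 : treeHt a = treeHt (f a) := treeHt_auto hT hauto a
    rw [ha1] at ha3
    exact (ne_of_lt ha2) ha3
  · have hUS : ∀ x : T, (∃ i, s i ≤ x) → x ∈ upClo N := by
      rintro x ⟨i, hi⟩; exact ⟨s i, hsN i, hi⟩
    have hgmem : ∀ x : ↥(upClo N), f x.1 ∈ upClo N := by
      intro x
      by_cases hx : ∃ i, s i ≤ x.1
      · exact hUS _ (fU x.1 hx)
      · rw [fid x.1 hx]; exact x.2
    have haU : a ∈ upClo N := ⟨a, haN, le_rfl⟩
    have hs0U : s 0 ∈ upClo N := ⟨s 0, hsN 0, le_rfl⟩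
    haveI hTS := isTree_subtype hT (upClo N)
    refine ⟨⟨t0, hNt⟩, fun x => ⟨f x.1, hgmem x⟩, ⟨⟨?_, ?_⟩, ?_⟩, ⟨a, haU⟩, haN, ?_⟩
    · intro x y hxy
      apply Subtype.ext
      exact finj (Subtype.ext_iff.mp hxy)
    · intro y
      obtain ⟨x, hx⟩ := fsurj y.1
      have hxm : x ∈ upClo N := by
        by_cases hxi : ∃ i, s i ≤ x
        · exact hUS x hxi
        · have hxy : x = (y : T) := (fid x hxi).symm.trans hx
          rw [hxy]; exact y.2
      exact ⟨⟨x, hxm⟩, Subtype.ext hx⟩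
    · intro x y hxy
      have hlt : (x : T) < (y : T) := Subtype.coe_lt_coe.mpr hxy
      exact Subtype.mk_lt_mk.mpr (fmono x.1 y.1 hlt)
    · have hIioS : Set.Iio (⟨a, haU⟩ : ↥(upClo N)) = Set.Iio (⟨s 0, hs0U⟩ : ↥(upClo N)) := by
        ext x
        simp only [Set.mem_Iio]
        rw [← Subtype.coe_lt_coe, ← Subtype.coe_lt_coe]
        exact Set.ext_iff.mp haIio x.1
      have hh1 : treeHt (⟨a, haU⟩ : ↥(upClo N)) = treeHt (⟨s 0, hs0U⟩ : ↥(upClo N)) :=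
        treeHt_congr hTS hIioS
      have hh2 : (⟨s 0, hs0U⟩ : ↥(upClo N)) < ⟨f a, hgmem ⟨a, haU⟩⟩ :=
        Subtype.mk_lt_mk.mpr hfa
      rw [hh1]
      exact treeHt_lt hTS hh2
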